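/- arXiv:1604.03464 — 3 statements merged into one kernel-verified Lean document; each statement's English description precedes it below -/
import Mathlib

section
/- If x is a nonzero polynomial in ℂ[t] and y is any polynomial in ℂ[t], then the polynomial (t+1)·x² + t²·y² is not constant. -/
open Polynomial

theorem stmt_3 (x y : Polynomial ℂ) (hx : x ≠ 0) :
    ¬ ∃ c : ℂ, (X + 1) * x ^ 2 + X ^ 2 * y ^ 2 = C c := by
  rintro ⟨c, hc⟩
  have hX1 : (X + 1 : Polynomial ℂ) ≠ 0 := by
    intro h
    have := congrArg (fun p => Polynomial.coeff p 1) h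
    simp [coeff_one] at this
  have hXd : (X + 1 : Polynomial ℂ).natDegree = 1 := by
    have : (X + 1 : Polynomial ℂ) = X + C 1 := by simp
    rw [this, natDegree_X_add_C]
  have hx2 : x ^ 2 ≠ 0 := pow_ne_zero _ hx
  have hp : ((X + 1) * x ^ 2 : Polynomial ℂ).natDegree = 1 + 2 * x.natDegree := by
    rw [natDegree_mul hX1 hx2, hXd, natDegree_pow]
  have hdeg : (((X + 1) * x ^ 2 + X ^ 2 * y ^ 2 : Polynomial ℂ)).natDegree = 0 := by
    rw [hc]; exact natDegree_C c
  by_cases hy : y = 0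
  · subst hy
    rw [show ((0:Polynomial ℂ))^2 = 0 by ring, mul_zero, add_zero, hp] at hdeg
    omega
  · have hq : ((X ^ 2 * y ^ 2 : Polynomial ℂ)).natDegree = 2 + 2 * y.natDegree := by
      rw [natDegree_mul (pow_ne_zero _ X_ne_zero) (pow_ne_zero _ hy),
        natDegree_pow, natDegree_pow, natDegree_X]
    rcases lt_trichotomy ((X + 1) * x ^ 2 : Polynomial ℂ).natDegree
        ((X ^ 2 * y ^ 2 : Polynomial ℂ)).natDegree with h | h | h
    · rw [natDegree_add_eq_right_of_natDegree_lt h, hq] at hdeg; omega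
    · rw [hp, hq] at h; omega
    · rw [natDegree_add_eq_left_of_natDegree_lt h, hp] at hdeg; omega
end

section
/- Let M ⊆ ℂ(t)* be the subgroup of rational functions of the form c·∏ᵢ (t - eᵢ)^{nᵢ} with c ∈ ℂ* and nᵢ ∈ ℤ, where e₁,…,eₙ ∈ ℂ are fixed distinct points. Let a, b ∈ ℂ be distinct and distinct from all eᵢ. Then the image of M under the map f ↦ (f(a), f(b)) ∈ ℂ* × ℂ* is not all of ℂ* × ℂ*. -/
/-- The image of the group `M = {c ∏ (t - eᵢ)^{nᵢ}}` under simultaneous evaluation at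
two points `a, b` distinct from the `eᵢ` is not all of `ℂ* × ℂ*`. -/
theorem stmt_6 (n : ℕ) (e : Fin n → ℂ) (he : Function.Injective e)
    (a b : ℂ) (hab : a ≠ b) (ha : ∀ i, a ≠ e i) (hb : ∀ i, b ≠ e i) :
    ¬ ∀ u v : ℂˣ, ∃ (c : ℂˣ) (m : Fin n → ℤ),
        (c : ℂ) * ∏ i, (a - e i) ^ (m i) = (u : ℂ) ∧
        (c : ℂ) * ∏ i, (b - e i) ^ (m i) = (v : ℂ) := by
  intro h
  set g : (Fin n → ℤ) → ℂ := fun m => ∏ i, ((b - e i) / (a - e i)) ^ (m i) with hg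
  have hsub : {z : ℂ | z ≠ 0} ⊆ Set.range g := by
    intro z hz
    obtain ⟨c, m, h1, h2⟩ := h 1 (Units.mk0 z hz)
    refine ⟨m, ?_⟩
    have hca : (c : ℂ) ≠ 0 := c.ne_zero
    simp only [Units.val_one] at h1
    simp only [Units.val_mk0] at h2
    simp only [hg, div_zpow, Finset.prod_div_distrib]
    calc (∏ i, (b - e i) ^ (m i)) / (∏ i, (a - e i) ^ (m i))
        = ((c : ℂ) * ∏ i, (b - e i) ^ (m i)) / ((c : ℂ) * ∏ i, (a - e i) ^ (m i)) := by
          rw [mul_div_mul_left _ _ hca]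
      _ = z / 1 := by rw [h1, h2]
      _ = z := div_one z
  have hS : ({z : ℂ | z ≠ 0}).Countable := (Set.countable_range g).mono hsub
  have huniv : (Set.univ : Set ℂ).Countable := by
    have : (Set.univ : Set ℂ) ⊆ {z : ℂ | z ≠ 0} ∪ {0} := by
      intro z _
      by_cases hz : z = 0
      · exact Or.inr hz
      · exact Or.inl hz
    exact ((hS.union (Set.countable_singleton 0)).mono this)
  have : Uncountable ℂ := Complex.ofReal_injective.uncountable
  exact (not_countable (α := ℂ)) (Set.countable_univ_iff.mp huniv)
end

section
/- Over the field K = ℂ(t), every nondegenerate quadratic form in n ≥ 3 variables is isotropic, and consequently for every b ∈ K* the equation q(x₁,…,xₙ) = b has a solution in K. -/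
open Polynomial

noncomputable section TsenAux

/-- Square root modulo a squarefree polynomial over ℂ. -/
private lemma tsen_exists_sqrt_mod (a b : ℂ[X]) (hb : Squarefree b) :
    ∃ c : ℂ[X], b ∣ c ^ 2 - a := by
  classical
  have hb0 : b ≠ 0 := hb.ne_zero
  have hnodup : b.roots.Nodup :=
    Polynomial.nodup_roots (PerfectField.separable_iff_squarefree.mpr hb)
  set s : Finset ℂ := b.roots.toFinset with hs
  have hf : ∀ r : ℂ, ∃ z : ℂ, z ^ 2 = a.eval r := fun r =>
    IsAlgClosed.exists_pow_nat_eq (a.eval r) (by norm_num)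
  choose f hfsq using hf
  refine ⟨Lagrange.interpolate s id f, ?_⟩
  have hsplit : b = C b.leadingCoeff * (b.roots.map fun r => X - C r).prod :=
    (IsAlgClosed.splits b).eq_prod_roots
  have hprod : (b.roots.map fun r => X - C r).prod = ∏ r ∈ s, (X - C r) := by
    rw [hs, Finset.prod_eq_multiset_prod, Multiset.toFinset_val, hnodup.dedup]
  have hdvd : (∏ r ∈ s, (X - C r)) ∣ (Lagrange.interpolate s id f) ^ 2 - a := by
    refine Finset.prod_dvd_of_coprime
      (fun r hr r' hr' hne =>
        Polynomial.isCoprime_X_sub_C_of_isUnit_sub ((sub_ne_zero.mpr hne).isUnit))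
      (fun r hr => ?_)
    rw [dvd_iff_isRoot, IsRoot.def, eval_sub, eval_pow]
    have := Lagrange.eval_interpolate_at_node f (Set.injOn_id _) hr
    simp only [id] at this
    rw [this, hfsq, sub_self]
  rw [hsplit, hprod, mul_comm]
  exact (IsUnit.mul_right_dvd (isUnit_C.mpr (isUnit_iff_ne_zero.mpr
    (leadingCoeff_ne_zero.mpr hb0)))).mpr hdvd

private lemma tsen_unit_of_deg_zero {p : ℂ[X]} (hp : p ≠ 0) (h : p.natDegree = 0) : IsUnit p := by
  obtain ⟨c, rfl⟩ := Polynomial.natDegree_eq_zero.mp h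
  exact isUnit_C.mpr (isUnit_iff_ne_zero.mpr (by rintro rfl; simp at hp))

private lemma tsen_sq_mul_squarefree_aux : ∀ N : ℕ, ∀ g : ℂ[X], g ≠ 0 → g.natDegree ≤ N →
    ∃ h s : ℂ[X], h ≠ 0 ∧ s ≠ 0 ∧ Squarefree s ∧ g = h ^ 2 * s := by
  intro N
  induction N with
  | zero =>
    intro g hg hd
    exact ⟨1, g, one_ne_zero, hg,
      (tsen_unit_of_deg_zero hg (Nat.le_zero.mp hd)).squarefree, by ring⟩
  | succ N ih =>
    intro g hg hd
    by_cases hsf : Squarefree g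
    · exact ⟨1, g, one_ne_zero, hg, hsf, by ring⟩
    · obtain ⟨p, hpdvd, hpu⟩ : ∃ p : ℂ[X], p * p ∣ g ∧ ¬ IsUnit p := by
        simpa [Squarefree] using hsf
      obtain ⟨g', hg'⟩ := hpdvd
      have hp0 : p ≠ 0 := by rintro rfl; simp at hg'; exact hg hg'
      have hg'0 : g' ≠ 0 := by rintro rfl; simp at hg'; exact hg hg'
      have hpdeg : 0 < p.natDegree := by
        rcases Nat.eq_zero_or_pos p.natDegree with h0 | h0
        · exact absurd (tsen_unit_of_deg_zero hp0 h0) hpu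
        · exact h0
      have hlt : g'.natDegree ≤ N := by
        have : g.natDegree = p.natDegree + p.natDegree + g'.natDegree := by
          rw [hg', natDegree_mul (mul_ne_zero hp0 hp0) hg'0, natDegree_mul hp0 hp0]
        omega
      obtain ⟨h, s, hh0, hs0, hsf', rfl⟩ := ih g' hg'0 hlt
      exact ⟨p * h, s, mul_ne_zero hp0 hh0, hs0, hsf', by rw [hg']; ring⟩

private lemma tsen_exists_sq_mul_squarefree (g : ℂ[X]) (hg : g ≠ 0) :
    ∃ h s : ℂ[X], h ≠ 0 ∧ s ≠ 0 ∧ Squarefree s ∧ g = h ^ 2 * s :=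
  tsen_sq_mul_squarefree_aux g.natDegree g hg le_rfl

private lemma tsen_not_square_poly (a p q : ℂ[X]) (ha : Squarefree a) (hdeg : 0 < a.natDegree)
    (hcop : IsCoprime p q) (h : a * p ^ 2 = q ^ 2) : False := by
  have ha0 : a ≠ 0 := ha.ne_zero
  obtain ⟨r, hirr, hrdvd⟩ := WfDvdMonoid.exists_irreducible_factor
    (fun hu => by have := natDegree_eq_zero_of_isUnit hu; omega) ha0
  have hrprime : Prime r := hirr.prime
  have hrq : r ∣ q := hrprime.dvd_of_dvd_pow (show r ∣ q ^ 2 from h ▸ Dvd.dvd.mul_right hrdvd _)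
  have hrp : ¬ r ∣ p := fun hrp => hirr.not_isUnit (hcop.isUnit_of_dvd' hrp hrq)
  obtain ⟨a₁, ha₁⟩ := hrdvd
  obtain ⟨q₁, hq₁⟩ := hrq
  have hr0 : r ≠ 0 := hrprime.ne_zero
  have key : a₁ * p ^ 2 = r * q₁ ^ 2 := by
    apply mul_left_cancel₀ hr0
    rw [ha₁, hq₁] at h; linear_combination h
  have : r ∣ a₁ := by
    rcases hrprime.dvd_mul.mp ⟨q₁ ^ 2, key⟩ with h' | h'
    · exact h'
    · exact absurd (hrprime.dvd_of_dvd_pow h') hrp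
  obtain ⟨a₂, rfl⟩ := this
  exact hirr.not_isUnit (ha r ⟨a₂, by rw [ha₁]; ring⟩)

private lemma tsen_not_square (a : ℂ[X]) (ha : Squarefree a) (hdeg : 0 < a.natDegree)
    (x : RatFunc ℂ) (hx : (algebraMap ℂ[X] (RatFunc ℂ) a) * x ^ 2 = 1) : False := by
  have hq0 : (algebraMap ℂ[X] (RatFunc ℂ)) x.denom ≠ 0 :=
    RatFunc.algebraMap_ne_zero x.denom_ne_zero
  have hnd := RatFunc.num_div_denom x
  have h1 : (algebraMap ℂ[X] (RatFunc ℂ)) x.num = x * algebraMap ℂ[X] (RatFunc ℂ) x.denom := by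
    rw [div_eq_iff hq0] at hnd; exact hnd
  have hmap : algebraMap ℂ[X] (RatFunc ℂ) (a * x.num ^ 2) =
      algebraMap ℂ[X] (RatFunc ℂ) (x.denom ^ 2) := by
    rw [map_mul, map_pow, map_pow, h1]
    linear_combination (algebraMap ℂ[X] (RatFunc ℂ) x.denom) ^ 2 * hx
  exact tsen_not_square_poly a x.num x.denom ha hdeg x.isCoprime_num_denom
    ((IsFractionRing.injective ℂ[X] (RatFunc ℂ)) hmap)

private lemma tsen_descent_step {F : Type*} [Field F] (h2 : (2:F) ≠ 0) (A B B₁ Cc H x y : F)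
    (hA : A ≠ 0) (hB₁ : B₁ ≠ 0) (hy : y ≠ 0)
    (hkey : Cc ^ 2 - A = B * B₁ * H ^ 2) (h1 : A * x ^ 2 + B₁ * y ^ 2 = 1) :
    ∃ x' y' : F, A * x' ^ 2 + B * y' ^ 2 = 1 := by
  by_cases hC : Cc = A * x
  · have t1 : B * H ^ 2 * (B₁ * y ^ 2) = (Cc ^ 2 - A) * y ^ 2 := by
      linear_combination (-y^2) * hkey
    have t2 : (Cc ^ 2 - A) * y ^ 2 = (-A * y ^ 2) * (B₁ * y ^ 2) := by
      subst hC; linear_combination (A * y^2) * h1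
    have hBH : B * H ^ 2 = -A * y ^ 2 :=
      mul_right_cancel₀ (mul_ne_zero hB₁ (pow_ne_zero 2 hy)) (t1.trans t2)
    refine ⟨(1 + A⁻¹) / 2, (1 - A⁻¹) * H / (2 * y), ?_⟩
    have e3 : B * ((1 - A⁻¹) * H / (2 * y)) ^ 2 = -A * ((1 - A⁻¹) / 2) ^ 2 := by
      field_simp
      linear_combination (A-1)^2 * hBH
    rw [e3]
    linear_combination (2*2⁻¹)^2 * mul_inv_cancel₀ hA + (2*2⁻¹+1) * mul_inv_cancel₀ h2
  · have hd : Cc - A * x ≠ 0 := sub_ne_zero.mpr hC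
    have e1 : B * (H * B₁ * y) ^ 2 = (Cc ^ 2 - A) * (B₁ * y ^ 2) := by
      linear_combination (-B₁*y^2) * hkey
    have e2 : B₁ * y ^ 2 = 1 - A * x ^ 2 := by linear_combination h1
    have key2 : A * (1 - Cc * x) ^ 2 + B * (H * B₁ * y) ^ 2 = (Cc - A * x) ^ 2 := by
      rw [e1, e2]; ring
    refine ⟨(1 - Cc * x) / (Cc - A * x), H * B₁ * y / (Cc - A * x), ?_⟩
    field_simp
    linear_combination key2

private lemma tsen_char : (2 : RatFunc ℂ) ≠ 0 := by
  have : CharZero (RatFunc ℂ) :=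
    charZero_of_injective_algebraMap (algebraMap ℂ (RatFunc ℂ)).injective
  exact two_ne_zero

/-- Constant squarefree coefficient case. -/
private lemma tsen_const_case (c : ℂ) (hc : c ≠ 0) (b : ℂ[X]) (hb0 : b ≠ 0) :
    ∃ x y : RatFunc ℂ,
      algebraMap ℂ[X] (RatFunc ℂ) (C c) * x ^ 2 + algebraMap ℂ[X] (RatFunc ℂ) b * y ^ 2 = 1 := by
  obtain ⟨z, hz⟩ := IsAlgClosed.exists_pow_nat_eq c (n := 2) (by norm_num)
  have hz0 : z ≠ 0 := by rintro rfl; rw [← hz] at hc; simp at hc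
  have hCz : RatFunc.C z ≠ 0 := by
    have : algebraMap ℂ[X] (RatFunc ℂ) (C z) ≠ 0 :=
      RatFunc.algebraMap_ne_zero (by simpa using hz0)
    rwa [RatFunc.algebraMap_C] at this
  refine ⟨(RatFunc.C z)⁻¹, 0, ?_⟩
  rw [RatFunc.algebraMap_C, ← hz, map_pow]
  field_simp
  simp

/-- Main descent: binary diagonal forms with squarefree polynomial coefficients
represent 1 over ℂ(t). -/
private lemma tsen_binary_aux : ∀ N : ℕ, ∀ a b : ℂ[X], Squarefree a → Squarefree b →
    a.natDegree ≤ b.natDegree → a.natDegree + b.natDegree ≤ N →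
    ∃ x y : RatFunc ℂ,
      algebraMap ℂ[X] (RatFunc ℂ) a * x ^ 2 + algebraMap ℂ[X] (RatFunc ℂ) b * y ^ 2 = 1 := by
  intro N
  induction N with
  | zero =>
    intro a b ha hb hab hN
    have ha0 : a ≠ 0 := ha.ne_zero
    obtain ⟨c, rfl⟩ := Polynomial.natDegree_eq_zero.mp (by omega : a.natDegree = 0)
    exact tsen_const_case c (by rintro rfl; simp at ha0) b hb.ne_zero
  | succ N ih =>
    intro a b ha hb hab hN
    have ha0 : a ≠ 0 := ha.ne_zero
    have hb0 : b ≠ 0 := hb.ne_zero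
    by_cases hA0 : a.natDegree = 0
    · obtain ⟨c, rfl⟩ := Polynomial.natDegree_eq_zero.mp hA0
      exact tsen_const_case c (by rintro rfl; simp at ha0) b hb0
    · have ha1 : 0 < a.natDegree := Nat.pos_of_ne_zero hA0
      have hb1 : 0 < b.natDegree := lt_of_lt_of_le ha1 hab
      -- square root of a mod b, reduced mod b
      obtain ⟨c, hdegc, hdvd⟩ : ∃ c : ℂ[X], c.degree < b.degree ∧ b ∣ c ^ 2 - a := by
        obtain ⟨c₀, hc₀⟩ := tsen_exists_sqrt_mod a b hb
        have hbm : (b * C b.leadingCoeff⁻¹).Monic := monic_mul_leadingCoeff_inv hb0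
        refine ⟨c₀ %ₘ (b * C b.leadingCoeff⁻¹), ?_, ?_⟩
        · have h1 := degree_modByMonic_lt c₀ hbm
          rwa [degree_mul_leadingCoeff_inv _ hb0] at h1
        · have h1 := modByMonic_add_div c₀ (b * C b.leadingCoeff⁻¹)
          have h2 : c₀ - c₀ %ₘ (b * C b.leadingCoeff⁻¹) =
              (b * C b.leadingCoeff⁻¹) * (c₀ /ₘ (b * C b.leadingCoeff⁻¹)) := by
            linear_combination - h1
          have h3 : b ∣ c₀ - c₀ %ₘ (b * C b.leadingCoeff⁻¹) :=
            Dvd.dvd.trans ⟨C b.leadingCoeff⁻¹, rfl⟩ ⟨_, h2⟩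
          have h4 : (c₀ %ₘ (b * C b.leadingCoeff⁻¹)) ^ 2 - a =
              (c₀ ^ 2 - a) - (c₀ - c₀ %ₘ (b * C b.leadingCoeff⁻¹)) *
                (c₀ + c₀ %ₘ (b * C b.leadingCoeff⁻¹)) := by ring
          rw [h4]
          exact dvd_sub hc₀ (Dvd.dvd.mul_right h3 _)
      have hcb : c.natDegree < b.natDegree := by
        rcases eq_or_ne c 0 with h | h
        · rw [h]; simpa using hb1
        · exact natDegree_lt_natDegree h hdegc
      obtain ⟨m, hm⟩ := hdvd
      have hm0 : m ≠ 0 := by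
        rintro rfl
        rw [mul_zero, sub_eq_zero] at hm
        have : IsUnit c := ha c ⟨1, by rw [← hm]; ring⟩
        have hc0 := natDegree_eq_zero_of_isUnit this
        have : a.natDegree = 0 := by rw [← hm, natDegree_pow]; omega
        omega
      have hdm : b.natDegree + m.natDegree = (c ^ 2 - a).natDegree := by
        rw [hm, natDegree_mul hb0 hm0]
      have hsub : (c ^ 2 - a).natDegree ≤ max (2 * c.natDegree) a.natDegree := by
        have := natDegree_sub_le (c ^ 2) a
        rwa [natDegree_pow] at this
      have hmax : max (2 * c.natDegree) a.natDegree ≤ 2 * b.natDegree - 1 :=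
        max_le (by omega) (by omega)
      have hmb : m.natDegree < b.natDegree := by omega
      obtain ⟨h, b₁, hh0, hb₁0, hb₁sf, hmdec⟩ := tsen_exists_sq_mul_squarefree m hm0
      have hb₁deg : b₁.natDegree < b.natDegree := by
        have : m.natDegree = 2 * h.natDegree + b₁.natDegree := by
          rw [hmdec, natDegree_mul (pow_ne_zero 2 hh0) hb₁0, natDegree_pow]
        omega
      have hstep : ∃ x y : RatFunc ℂ,
          algebraMap ℂ[X] (RatFunc ℂ) a * x ^ 2 +
          algebraMap ℂ[X] (RatFunc ℂ) b₁ * y ^ 2 = 1 := by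
        rcases le_total a.natDegree b₁.natDegree with hord | hord
        · exact ih a b₁ ha hb₁sf hord (by omega)
        · obtain ⟨x, y, hxy⟩ := ih b₁ a hb₁sf ha hord (by omega)
          exact ⟨y, x, by linear_combination hxy⟩
      obtain ⟨x, y, hxy⟩ := hstep
      have hy0 : y ≠ 0 := by
        rintro rfl
        rw [zero_pow (by norm_num), mul_zero, add_zero] at hxy
        exact tsen_not_square a ha ha1 x hxy
      have hkey : (algebraMap ℂ[X] (RatFunc ℂ) c) ^ 2 - algebraMap ℂ[X] (RatFunc ℂ) a =
          algebraMap ℂ[X] (RatFunc ℂ) b * algebraMap ℂ[X] (RatFunc ℂ) b₁ *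
            (algebraMap ℂ[X] (RatFunc ℂ) h) ^ 2 := by
        have heq : c ^ 2 - a = b * b₁ * h ^ 2 := by rw [hm, hmdec]; ring
        have := congrArg (algebraMap ℂ[X] (RatFunc ℂ)) heq
        rw [map_sub, map_pow, map_mul, map_mul, map_pow] at this
        exact this
      exact tsen_descent_step tsen_char _ _ _ _ _ x y
        (RatFunc.algebraMap_ne_zero ha0) (RatFunc.algebraMap_ne_zero hb₁0) hy0 hkey hxy

/-- Every nondegenerate binary diagonal form over ℂ(t) represents 1. -/
private lemma tsen_binary_universal (a b : RatFunc ℂ) (ha : a ≠ 0) (hb : b ≠ 0) :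
    ∃ x y : RatFunc ℂ, a * x ^ 2 + b * y ^ 2 = 1 := by
  have reduce : ∀ u : RatFunc ℂ, u ≠ 0 → ∃ (s : ℂ[X]) (w : RatFunc ℂ),
      Squarefree s ∧ s ≠ 0 ∧ w ≠ 0 ∧ u = algebraMap ℂ[X] (RatFunc ℂ) s * w ^ 2 := by
    intro u hu
    have hnum : u.num ≠ 0 := RatFunc.num_ne_zero hu
    have hden : u.denom ≠ 0 := u.denom_ne_zero
    obtain ⟨h, s, hh0, hs0, hsf, hdec⟩ :=
      tsen_exists_sq_mul_squarefree (u.num * u.denom) (mul_ne_zero hnum hden)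
    have hdenK : algebraMap ℂ[X] (RatFunc ℂ) u.denom ≠ 0 := RatFunc.algebraMap_ne_zero hden
    have hhK : algebraMap ℂ[X] (RatFunc ℂ) h ≠ 0 := RatFunc.algebraMap_ne_zero hh0
    refine ⟨s, algebraMap ℂ[X] (RatFunc ℂ) h / algebraMap ℂ[X] (RatFunc ℂ) u.denom,
      hsf, hs0, div_ne_zero hhK hdenK, ?_⟩
    have hnd := RatFunc.num_div_denom u
    rw [div_eq_iff hdenK] at hnd
    have hcast : algebraMap ℂ[X] (RatFunc ℂ) u.num * algebraMap ℂ[X] (RatFunc ℂ) u.denom =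
        algebraMap ℂ[X] (RatFunc ℂ) (h ^ 2 * s) := by
      rw [← map_mul]; exact congrArg _ hdec
    rw [map_mul, map_pow] at hcast
    field_simp
    linear_combination hcast - (algebraMap ℂ[X] (RatFunc ℂ) u.denom) * hnd
  obtain ⟨sa, wa, hsa, hsa0, hwa, hadec⟩ := reduce a ha
  obtain ⟨sb, wb, hsb, hsb0, hwb, hbdec⟩ := reduce b hb
  have main : ∃ x y : RatFunc ℂ,
      algebraMap ℂ[X] (RatFunc ℂ) sa * x ^ 2 + algebraMap ℂ[X] (RatFunc ℂ) sb * y ^ 2 = 1 := by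
    rcases le_total sa.natDegree sb.natDegree with hord | hord
    · exact tsen_binary_aux (sa.natDegree + sb.natDegree) sa sb hsa hsb hord le_rfl
    · obtain ⟨x, y, hxy⟩ :=
        tsen_binary_aux (sb.natDegree + sa.natDegree) sb sa hsb hsa hord le_rfl
      exact ⟨y, x, by linear_combination hxy⟩
  obtain ⟨x, y, hxy⟩ := main
  refine ⟨x / wa, y / wb, ?_⟩
  rw [hadec, hbdec]
  field_simp
  linear_combination hxy

end TsenAux

set_option maxHeartbeats 1000000
set_option synthInstance.maxHeartbeats 400000

/-- Over `K = ℂ(t)`, every nondegenerate quadratic form in `n ≥ 3` variables is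
isotropic, and consequently represents every nonzero element of `K`. -/
theorem stmt_15 (n : ℕ) (hn : 3 ≤ n)
    (q : QuadraticForm (RatFunc ℂ) (Fin n → RatFunc ℂ))
    (hq : (QuadraticMap.polarBilin q).Nondegenerate) :
    (∃ v : Fin n → RatFunc ℂ, v ≠ 0 ∧ q v = 0) ∧
    ∀ b : RatFunc ℂ, b ≠ 0 → ∃ x : Fin n → RatFunc ℂ, q x = b := by
  classical
  have h2 : (2 : RatFunc ℂ) ≠ 0 := tsen_char
  have : Invertible (2 : RatFunc ℂ) := invertibleOfNonzero h2
  have hsep := hq.1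
  -- Part A : isotropy
  have hqadd : ∀ u w : Fin n → RatFunc ℂ,
      q (u + w) = q u + q w + QuadraticMap.polar q u w := by
    intro u w
    simp only [QuadraticMap.polar]
    ring
  have partA : ∃ v : Fin n → RatFunc ℂ, v ≠ 0 ∧ q v = 0 := by
    have hsymm : (QuadraticMap.polarBilin q).IsSymm := by
      refine ⟨fun x y => ?_⟩
      simp [QuadraticMap.polarBilin, QuadraticMap.polar_comm]
    obtain ⟨e0, he0⟩ := LinearMap.BilinForm.exists_orthogonal_basis hsymm
    have hrank : Module.finrank (RatFunc ℂ) (Fin n → RatFunc ℂ) = n := Module.finrank_fin_fun _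
    let e : Module.Basis (Fin n) (RatFunc ℂ) (Fin n → RatFunc ℂ) := e0.reindex (finCongr hrank)
    have horth : ∀ i j : Fin n, i ≠ j → QuadraticMap.polar q (e i) (e j) = 0 := by
      intro i j hij
      have hne : (finCongr hrank).symm i ≠ (finCongr hrank).symm j :=
        fun hh => hij ((finCongr hrank).symm.injective hh)
      have := he0 hne
      simpa [e, Module.Basis.reindex_apply, Function.onFun, LinearMap.IsOrtho,
        QuadraticMap.polarBilin_apply_apply] using this
    let i0 : Fin n := ⟨0, by omega⟩
    let i1 : Fin n := ⟨1, by omega⟩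
    let i2 : Fin n := ⟨2, by omega⟩
    have hne01 : i0 ≠ i1 := Fin.ne_of_val_ne (by norm_num)
    have hne02 : i0 ≠ i2 := Fin.ne_of_val_ne (by norm_num)
    have hne12 : i1 ≠ i2 := Fin.ne_of_val_ne (by norm_num)
    have hpolar_self : ∀ w : Fin n → RatFunc ℂ, QuadraticMap.polar q w w = 2 * q w := by
      intro w
      rw [QuadraticMap.polar_self, two_smul, two_mul]
    have hdiag : ∀ i : Fin n, q (e i) ≠ 0 := by
      intro i hzero
      have hzeromap : QuadraticMap.polarBilin q (e i) = 0 := by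
        apply e.ext
        intro j
        rcases eq_or_ne i j with rfl | hij
        · show QuadraticMap.polar q (e i) (e i) = (0 : _ →ₗ[RatFunc ℂ] _) (e i)
          rw [hpolar_self, hzero, mul_zero]; simp
        · show QuadraticMap.polar q (e i) (e j) = (0 : _ →ₗ[RatFunc ℂ] _) (e j)
          rw [horth i j hij]; simp
      have hforall : ∀ w, QuadraticMap.polarBilin q (e i) w = 0 := by
        intro w; rw [hzeromap]; simp
      exact Module.Basis.ne_zero e i (hsep (e i) hforall)
    have hd0 : q (e i0) ≠ 0 := hdiag i0
    obtain ⟨x, y, hxy⟩ := tsen_binary_universal (q (e i1) / (- q (e i0)))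
      (q (e i2) / (- q (e i0)))
      (div_ne_zero (hdiag i1) (neg_ne_zero.mpr hd0))
      (div_ne_zero (hdiag i2) (neg_ne_zero.mpr hd0))
    have hne : - q (e i0) ≠ 0 := neg_ne_zero.mpr hd0
    have hval : q (e i1) * x ^ 2 + q (e i2) * y ^ 2 = - q (e i0) := by
      field_simp at hxy
      linear_combination -hxy
    have S1 : q (x • e i1) = x * x * q (e i1) := by
      rw [QuadraticMap.map_smul, smul_eq_mul]
    have S2 : q (y • e i2) = y * y * q (e i2) := by
      rw [QuadraticMap.map_smul, smul_eq_mul]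
    refine ⟨e i0 + x • e i1 + y • e i2, ?_, ?_⟩
    · -- nonzero : pair with e i0 under the polar form
      intro hv
      have hB := congrArg (fun w => QuadraticMap.polar q w (e i0)) hv
      rw [QuadraticMap.polar_add_left, QuadraticMap.polar_add_left,
        QuadraticMap.polar_smul_left, QuadraticMap.polar_smul_left,
        horth i1 i0 hne01.symm, horth i2 i0 hne02.symm, hpolar_self,
        QuadraticMap.polar_zero_left] at hB
      simp only [smul_eq_mul, mul_zero, add_zero] at hB
      exact (mul_ne_zero h2 hd0) hB
    · have A1 := hqadd (e i0 + x • e i1) (y • e i2)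
      have A2 := hqadd (e i0) (x • e i1)
      have P1 : QuadraticMap.polar q (e i0 + x • e i1) (y • e i2) = 0 := by
        rw [QuadraticMap.polar_add_left, QuadraticMap.polar_smul_left,
          QuadraticMap.polar_smul_right, QuadraticMap.polar_smul_right,
          horth i0 i2 hne02, horth i1 i2 hne12]
        simp
      have P2 : QuadraticMap.polar q (e i0) (x • e i1) = 0 := by
        rw [QuadraticMap.polar_smul_right, horth i0 i1 hne01]
        simp
      linear_combination A1 + A2 + S1 + S2 + P1 + P2 + hval
  refine ⟨partA, ?_⟩
  -- Part B : universality from isotropy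
  intro b hb
  obtain ⟨v, hv0, hqv⟩ := partA
  obtain ⟨u, hu⟩ : ∃ u, QuadraticMap.polar q v u ≠ 0 := by
    by_contra hcon
    push_neg at hcon
    exact hv0 (hsep v hcon)
  set s : RatFunc ℂ := (b - q u) / QuadraticMap.polar q v u with hs
  refine ⟨s • v + u, ?_⟩
  have A1 := hqadd (s • v) u
  have S1 : q (s • v) = s * s * q v := by rw [QuadraticMap.map_smul, smul_eq_mul]
  have P1 : QuadraticMap.polar q (s • v) u = s * QuadraticMap.polar q v u := by
    rw [QuadraticMap.polar_smul_left, smul_eq_mul]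
  have hsp : s * QuadraticMap.polar q v u = b - q u := by
    rw [hs]; field_simp
  linear_combination A1 + S1 + P1 + hsp + (s * s) * hqv
end
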